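/- Let G = (V,E) be a finite simple graph, let A ⊊ V be a nonempty set with 4|A| ≤ |V∖A|, let α > 0, let σ be a real with 3|A|/|V∖A| ≤ σ ≤ 3/4, set ε_σ = σ/(3(1−σ)), and let c > 0 be a real. Suppose S' ⊆ V satisfies δ_G(S')/α + |A∖S'| + ε_σ·|S'∖A| = |A| − c. Then ∅ ≠ S' ⊊ V and φ_G(S') < α, i.e. S' is an α-sparse cut of G. -/
import Mathlib


/-- Edges of `G` with one endpoint in `S` and the other endpoint in `U \ S`:
the cut edges `∂(S)` of `S`, inside the subgraph of `G` induced by `U` (when `S ⊆ U`). -/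
def cutEdgesIn {V : Type*} (G : SimpleGraph V) (U S : Set V) : Set (Sym2 V) :=
  {e | e ∈ G.edgeSet ∧ ∃ u v, e = s(u, v) ∧ u ∈ S ∧ v ∈ U ∧ v ∉ S}

/-- `δ(S)`, the number of cut edges of `S` inside the subgraph induced by `U`. -/
noncomputable def deltaIn {V : Type*} (G : SimpleGraph V) (U S : Set V) : ℕ :=
  (cutEdgesIn G U S).ncard

/-- The expansion `φ(S)` of the cut `S` inside the subgraph of `G` induced by `U`. -/
noncomputable def phiIn {V : Type*} (G : SimpleGraph V) (U S : Set V) : ℝ :=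
  (deltaIn G U S : ℝ) / min (S.ncard : ℝ) ((U \ S).ncard : ℝ)

/-- With `∅ ≠ A ⊊ V`, `4|A| ≤ |V ∖ A|`, `α > 0`, `3|A|/|V∖A| ≤ σ ≤ 3/4`,
`ε_σ = σ/(3(1−σ))` and `c > 0`, if `S'` satisfies
`δ_G(S')/α + |A∖S'| + ε_σ·|S'∖A| = |A| − c` (a minimum cut of the augmented graph whose
capacity is the max-flow value `|A| − c`), then `S'` is a nonempty proper `α`-sparse cut. -/
theorem stmt9 {V : Type*} [Fintype V] (G : SimpleGraph V) (A : Set V)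
    (hAne : A.Nonempty) (hAproper : A ≠ Set.univ) (hA : 4 * A.ncard ≤ Aᶜ.ncard)
    (α : ℝ) (hα : 0 < α) (σ : ℝ)
    (hσ1 : 3 * (A.ncard : ℝ) / (Aᶜ.ncard : ℝ) ≤ σ) (hσ2 : σ ≤ 3 / 4)
    (c : ℝ) (hc : 0 < c)
    (S' : Set V)
    (heq : (deltaIn G Set.univ S' : ℝ) / α + ((A \ S').ncard : ℝ) +
        (σ / (3 * (1 - σ))) * ((S' \ A).ncard : ℝ) = (A.ncard : ℝ) - c) :
    S'.Nonempty ∧ S' ≠ Set.univ ∧ phiIn G Set.univ S' < α := by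
  set ε := σ / (3 * (1 - σ)) with hεdef
  have hσ' : (0:ℝ) < 1 - σ := by linarith
  have hAcne : Aᶜ.Nonempty := by
    rwa [Set.nonempty_compl]
  have hAc0 : 0 < (Aᶜ.ncard : ℝ) := by
    exact_mod_cast (Set.ncard_pos (Set.toFinite _)).mpr hAcne
  have hA0 : 0 < (A.ncard : ℝ) := by
    exact_mod_cast (Set.ncard_pos (Set.toFinite _)).mpr hAne
  have hσpos : 0 < σ := lt_of_lt_of_le (by positivity) hσ1
  have hεpos : 0 < ε := by
    rw [hεdef]; positivity
  have hε1 : ε ≤ 1 := by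
    rw [hεdef, div_le_one (by linarith)]; linarith
  have hσA : 3 * (A.ncard : ℝ) ≤ σ * Aᶜ.ncard := by
    rw [div_le_iff₀ hAc0] at hσ1; linarith
  have hεA : (A.ncard : ℝ) ≤ ε * Aᶜ.ncard := by
    rw [hεdef, div_mul_eq_mul_div, le_div_iff₀ (by linarith)]
    nlinarith
  -- cardinality identities
  have f1 : (A ∩ S').ncard + (A \ S').ncard = A.ncard :=
    Set.ncard_inter_add_ncard_diff_eq_ncard A S' (Set.toFinite _)
  have f2 : (Aᶜ ∩ S').ncard + (Aᶜ \ S').ncard = Aᶜ.ncard :=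
    Set.ncard_inter_add_ncard_diff_eq_ncard Aᶜ S' (Set.toFinite _)
  have e1 : Aᶜ ∩ S' = S' \ A := by ext x; simp [Set.mem_diff, and_comm]
  have f3 : ((Set.univ \ S') ∩ A).ncard + ((Set.univ \ S') \ A).ncard = (Set.univ \ S').ncard :=
    Set.ncard_inter_add_ncard_diff_eq_ncard _ A (Set.toFinite _)
  have e2 : (Set.univ \ S') ∩ A = A \ S' := by ext x; simp [Set.mem_diff, and_comm]
  have e3 : (Set.univ \ S') \ A = Aᶜ \ S' := by ext x; simp [Set.mem_diff, and_comm]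
  rw [e1] at f2
  rw [e2, e3] at f3
  have f1' : ((A ∩ S').ncard : ℝ) + ((A \ S').ncard : ℝ) = (A.ncard : ℝ) := by
    exact_mod_cast congrArg (Nat.cast : ℕ → ℝ) f1
  have f2' : ((S' \ A).ncard : ℝ) + ((Aᶜ \ S').ncard : ℝ) = (Aᶜ.ncard : ℝ) := by
    exact_mod_cast congrArg (Nat.cast : ℕ → ℝ) f2
  have f3' : ((A \ S').ncard : ℝ) + ((Aᶜ \ S').ncard : ℝ) = ((Set.univ \ S').ncard : ℝ) := by
    exact_mod_cast congrArg (Nat.cast : ℕ → ℝ) f3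
  have hsub : ((A ∩ S').ncard : ℝ) ≤ (S'.ncard : ℝ) := by
    exact_mod_cast Set.ncard_le_ncard Set.inter_subset_right (Set.toFinite _)
  have hd0 : (0:ℝ) ≤ (deltaIn G Set.univ S' : ℝ) := Nat.cast_nonneg _
  have hm0 : (0:ℝ) ≤ ((S' \ A).ncard : ℝ) := Nat.cast_nonneg _
  have hk0 : (0:ℝ) ≤ ((Aᶜ \ S').ncard : ℝ) := Nat.cast_nonneg _
  have hdα : 0 ≤ (deltaIn G Set.univ S' : ℝ) / α := div_nonneg hd0 hα.le
  -- key bound on the min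
  have key : (deltaIn G Set.univ S' : ℝ) / α <
      min (S'.ncard : ℝ) ((Set.univ \ S').ncard : ℝ) := by
    apply lt_min
    · nlinarith [mul_nonneg hεpos.le hm0]
    · nlinarith [mul_nonneg (by linarith : (0:ℝ) ≤ 1 - ε) hk0,
        mul_nonneg hεpos.le hm0]
  have hmin0 : 0 < min (S'.ncard : ℝ) ((Set.univ \ S').ncard : ℝ) :=
    lt_of_le_of_lt hdα key
  have hS0 : (0:ℝ) < (S'.ncard : ℝ) := lt_of_lt_of_le hmin0 (min_le_left _ _)
  have hSc0 : (0:ℝ) < ((Set.univ \ S').ncard : ℝ) := lt_of_lt_of_le hmin0 (min_le_right _ _)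
  refine ⟨?_, ?_, ?_⟩
  · exact (Set.ncard_pos (Set.toFinite _)).mp (by exact_mod_cast hS0)
  · have : (Set.univ \ S').Nonempty :=
      (Set.ncard_pos (Set.toFinite _)).mp (by exact_mod_cast hSc0)
    obtain ⟨x, -, hx⟩ := this
    intro h; exact hx (h ▸ Set.mem_univ x)
  · rw [phiIn, div_lt_iff₀ hmin0]
    calc (deltaIn G Set.univ S' : ℝ)
        = (deltaIn G Set.univ S' : ℝ) / α * α := by field_simp
      _ < min (S'.ncard : ℝ) ((Set.univ \ S').ncard : ℝ) * α :=
          mul_lt_mul_of_pos_right key hα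
      _ = α * min (S'.ncard : ℝ) ((Set.univ \ S').ncard : ℝ) := mul_comm _ _
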